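/- Let T be a tree with at least three vertices. Fix any pendant vertex x of T and any linear order ≺ on V(T), and let U be the unique ν-matching of 𝒩(T) maximal with respect to >_lex. Let M and N be ν-matchings of 𝒩(T) with F ∈ M \ U and G ∈ N \ U, and assume (F \ G) ∩ V_N = ∅. Then there exists H ∈ U such that H ∩ F ≠ ∅ and H ∩ G ≠ ∅. -/

import Mathlib

open scoped Classical
open SimpleGraph Finset MvPolynomial

variable {V : Type*}

/-- The closed neighborhood `N_G[u]` of a vertex, as a finite set. -/
noncomputable def closedNbhd [Fintype V] (G : SimpleGraph V) (u : V) : Finset V :=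
  insert u (G.neighborFinset u)

/-- `F` is a facet of the closed neighborhood complex `𝒩(G)`:
`F = N_G[u]` for some vertex `u`, and no closed neighborhood of another vertex is
contained in `N_G[u]`. -/
def IsNFacet [Fintype V] (G : SimpleGraph V) (F : Finset V) : Prop :=
  ∃ u : V, F = closedNbhd G u ∧
    ∀ v : V, v ≠ u → ¬ closedNbhd G v ⊆ closedNbhd G u

/-- A `k`-matching of `𝒩(G)`: a set of `k` pairwise disjoint facets of `𝒩(G)`. -/
def IsNMatching [Fintype V] (G : SimpleGraph V) (k : ℕ) (M : Finset (Finset V)) : Prop :=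
  M.card = k ∧ (∀ F ∈ M, IsNFacet G F) ∧
    ∀ F ∈ M, ∀ F' ∈ M, F ≠ F' → Disjoint F F'

/-- The order on facets of `𝒩(T)` induced by a root `x` and a linear order on the
vertices: `N_T[u] > N_T[v]` iff `|N_T[u]| < |N_T[v]|`, or the sizes agree and
`level(u) < level(v)` where `level` is the distance from the root `x`, or both agree and
`u` comes earlier in the linear order. -/
def FacetGT [Fintype V] [LinearOrder V] (G : SimpleGraph V) (x : V)
    (F F' : Finset V) : Prop :=
  ∃ u u' : V, F = closedNbhd G u ∧ F' = closedNbhd G u' ∧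
    (F.card < F'.card ∨
     (F.card = F'.card ∧ G.dist x u < G.dist x u') ∨
     (F.card = F'.card ∧ G.dist x u = G.dist x u' ∧ u < u'))

/-- The lexicographic order on `ν`-matchings: writing each matching as a strictly
decreasing sequence of facets, `M >_lex N` iff at the first position where they differ,
the facet of `M` is larger; equivalently, the largest facet of the symmetric difference
`(M \ N) ∪ (N \ M)` belongs to `M`. -/
def MatchGTlex [Fintype V] [LinearOrder V] (G : SimpleGraph V) (x : V)
    (M N : Finset (Finset V)) : Prop :=
  ∃ F ∈ (M \ N) ∪ (N \ M), F ∈ M ∧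
    ∀ F' ∈ (M \ N) ∪ (N \ M), F' ≠ F → FacetGT G x F F'

lemma mem_closedNbhd' [Fintype V] {G : SimpleGraph V} {u z : V} :
    z ∈ closedNbhd G u ↔ z = u ∨ G.Adj u z := by
  simp [closedNbhd, SimpleGraph.mem_neighborFinset]

lemma self_mem_closedNbhd' [Fintype V] (G : SimpleGraph V) (u : V) :
    u ∈ closedNbhd G u := mem_closedNbhd'.mpr (Or.inl rfl)

lemma adj_dist_le_one {G : SimpleGraph V} {a b : V} (h : G.Adj a b) :
    G.dist a b ≤ 1 := by
  have := SimpleGraph.dist_le (SimpleGraph.Walk.cons h SimpleGraph.Walk.nil)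
  simpa using this

lemma dist_le_one_of_mem_closedNbhd [Fintype V] {G : SimpleGraph V} {a z : V}
    (h : z ∈ closedNbhd G a) : G.dist a z ≤ 1 := by
  rcases mem_closedNbhd'.mp h with rfl | h
  · simp [SimpleGraph.dist_self]
  · exact adj_dist_le_one h

lemma exists_path_length_eq_dist {G : SimpleGraph V} (hc : G.Connected) (a b : V) :
    ∃ p : G.Walk a b, p.IsPath ∧ p.length = G.dist a b := by
  obtain ⟨p, hp⟩ := hc.exists_walk_length_eq_dist a b
  refine ⟨p.bypass, SimpleGraph.Walk.bypass_isPath p, le_antisymm ?_ ?_⟩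
  · exact hp ▸ SimpleGraph.Walk.length_bypass_le p
  · exact SimpleGraph.dist_le p.bypass

lemma inter_nonempty_iff_dist_le_two [Fintype V] [DecidableEq V] {G : SimpleGraph V} (hc : G.Connected)
    (a b : V) : (closedNbhd G a ∩ closedNbhd G b).Nonempty ↔ G.dist a b ≤ 2 := by
  constructor
  · rintro ⟨z, hz⟩
    rw [Finset.mem_inter] at hz
    have h1 : G.dist a z ≤ 1 := dist_le_one_of_mem_closedNbhd hz.1
    have h2 : G.dist z b ≤ 1 := by
      rw [SimpleGraph.dist_comm]; exact dist_le_one_of_mem_closedNbhd hz.2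
    have := hc.dist_triangle (u := a) (v := z) (w := b)
    omega
  · intro hd
    obtain ⟨p, hp⟩ := hc.exists_walk_length_eq_dist a b
    have hle : p.length ≤ 2 := hp ▸ hd
    match p, hle with
    | SimpleGraph.Walk.nil, _ =>
        exact ⟨a, Finset.mem_inter.mpr ⟨self_mem_closedNbhd' G a, self_mem_closedNbhd' G a⟩⟩
    | SimpleGraph.Walk.cons h SimpleGraph.Walk.nil, _ =>
        exact ⟨b, Finset.mem_inter.mpr ⟨mem_closedNbhd'.mpr (Or.inr h),
          self_mem_closedNbhd' G b⟩⟩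
    | SimpleGraph.Walk.cons h₁ (SimpleGraph.Walk.cons h₂ SimpleGraph.Walk.nil), _ =>
        rename_i m _
        exact ⟨m, Finset.mem_inter.mpr ⟨mem_closedNbhd'.mpr (Or.inr h₁),
          mem_closedNbhd'.mpr (Or.inr h₂.symm)⟩⟩
    | SimpleGraph.Walk.cons _ (SimpleGraph.Walk.cons _ (SimpleGraph.Walk.cons _ _)), hle =>
        simp [SimpleGraph.Walk.length_cons] at hle

/-- In a tree with at least 3 vertices, closed neighborhoods determine their centers. -/
lemma closedNbhd_injective [Fintype V] {G : SimpleGraph V} (hT : G.IsTree)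
    (h3 : 3 ≤ Fintype.card V) {w w' : V} (h : closedNbhd G w = closedNbhd G w') :
    w = w' := by
  by_contra hne
  have hadj : G.Adj w w' := by
    have := self_mem_closedNbhd' G w'
    rw [← h, mem_closedNbhd'] at this
    rcases this with h' | h'
    · exact absurd h'.symm hne
    · exact h'
  -- every neighbor of w is w'
  have hnbr : ∀ t, G.Adj w t → t = w' := by
    intro t ht
    by_contra htne
    have htmem : t ∈ closedNbhd G w' := by
      rw [← h, mem_closedNbhd']; exact Or.inr ht
    rw [mem_closedNbhd'] at htmem
    rcases htmem with rfl | hadj' <;> [exact htne rfl; skip]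
    -- triangle w, w', t gives a cycle
    have htw : t ≠ w := ht.ne'
    have hcyc : (SimpleGraph.Walk.cons hadj (SimpleGraph.Walk.cons hadj'
        (SimpleGraph.Walk.cons ht.symm SimpleGraph.Walk.nil))).IsCycle := by
      constructor
      · constructor
        · constructor
          simp only [SimpleGraph.Walk.edges_cons, SimpleGraph.Walk.edges_nil,
            List.nodup_cons, List.mem_cons, List.not_mem_nil, Sym2.eq_iff]
          tauto
        · simp
      · simp only [SimpleGraph.Walk.support_cons, SimpleGraph.Walk.support_nil,
          List.tail_cons, List.nodup_cons, List.mem_cons, List.not_mem_nil]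
        tauto
    exact hT.2 _ hcyc
  have hnbr' : ∀ t, G.Adj w' t → t = w := by
    intro t ht
    by_contra htne
    have htmem : t ∈ closedNbhd G w := by
      rw [h, mem_closedNbhd']; exact Or.inr ht
    rw [mem_closedNbhd'] at htmem
    rcases htmem with rfl | hadj' <;> [exact htne rfl; skip]
    have := hnbr t hadj'
    subst this
    exact ht.ne rfl
  -- all vertices reachable from w are in {w, w'}
  have hreach : ∀ (s r : V) (p : G.Walk s r), (s = w ∨ s = w') → (r = w ∨ r = w') := by
    intro s r p
    induction p with
    | nil => exact fun h => h
    | cons hadj'' p ih =>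
        rename_i s' c' r' _
        intro hs
        apply ih
        rcases hs with rfl | rfl
        · exact Or.inr (hnbr _ hadj'')
        · exact Or.inl (hnbr' _ hadj'')
  -- but there is a third vertex
  have : ∃ t : V, t ≠ w ∧ t ≠ w' := by
    by_contra hno
    push_neg at hno
    have : (Finset.univ : Finset V) ⊆ {w, w'} := by
      intro t _
      rcases Classical.em (t = w) with rfl | htw
      · simp
      · simp [hno t htw]
    have := Finset.card_le_card this
    have h2 : ({w, w'} : Finset V).card ≤ 2 := Finset.card_insert_le _ _ |>.trans (by simp)
    simp [Finset.card_univ] at this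
    omega
  obtain ⟨t, htw, htw'⟩ := this
  obtain ⟨p⟩ := hT.1 w t
  rcases hreach w t p (Or.inl rfl) with h' | h' <;> [exact htw h'; exact htw' h']

/-- In a tree, distances to the two endpoints of an edge are never equal. -/
lemma tree_dist_ne {G : SimpleGraph V} (hT : G.IsTree) {y v : V} (hyv : G.Adj y v)
    (z : V) : G.dist z y ≠ G.dist z v := by
  intro heq
  set k := G.dist z y with hk
  have hyvne : y ≠ v := hyv.ne
  obtain ⟨r, hrpath, hrlen⟩ := exists_path_length_eq_dist hT.1 z y
  -- v is not in r's support
  have hvns : v ∉ r.support := by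
    intro hv
    have h1 := SimpleGraph.Walk.length_takeUntil_le r hv
    have htake : G.dist z v ≤ (r.takeUntil v hv).length := SimpleGraph.dist_le _
    have hspec := r.take_spec hv
    have hlen : (r.takeUntil v hv).length + (r.dropUntil v hv).length = r.length := by
      have := congrArg SimpleGraph.Walk.length hspec
      rwa [SimpleGraph.Walk.length_append] at this
    have hdropne : (r.dropUntil v hv).length ≠ 0 := by
      intro h0
      exact hyvne (SimpleGraph.Walk.eq_of_length_eq_zero h0).symm
    omega
  -- r.concat hyv : walk z → v, a path of length k+1
  have hconcat : (r.concat hyv).IsPath := by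
    rw [← SimpleGraph.Walk.isPath_reverse_iff, SimpleGraph.Walk.reverse_concat]
    exact SimpleGraph.Walk.IsPath.cons hrpath.reverse (by simpa using hvns)
  obtain ⟨q, hqpath, hqlen⟩ := exists_path_length_eq_dist hT.1 z v
  have := hT.2.path_unique ⟨r.concat hyv, hconcat⟩ ⟨q, hqpath⟩
  have hweq : r.concat hyv = q := congrArg Subtype.val this
  have := congrArg SimpleGraph.Walk.length hweq
  rw [SimpleGraph.Walk.length_concat] at this
  omega

/-- In a tree, if z~z' with z on the y-side and z' on the v-side, then z = y and z' = v. -/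
lemma tree_flip_pair {G : SimpleGraph V} (hT : G.IsTree) {y v : V} (hyv : G.Adj y v)
    {z z' : V} (hzz' : G.Adj z z')
    (h1 : G.dist z y + 1 = G.dist z v) (h2 : G.dist z' v + 1 = G.dist z' y) :
    z = y ∧ z' = v := by
  have hconn := hT.1
  set l := G.dist z y with hl
  have hd1 : G.dist z z' ≤ 1 := adj_dist_le_one hzz'
  have hd1' : G.dist z' z ≤ 1 := by rw [SimpleGraph.dist_comm]; exact hd1
  have ht1 : G.dist z v ≤ G.dist z z' + G.dist z' v := hconn.dist_triangle
  have ht2 : G.dist z' y ≤ G.dist z' z + G.dist z y := hconn.dist_triangle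
  -- d(z',v) = l, d(z',y) = l + 1
  have hz'v : G.dist z' v = l := by omega
  have hz'y : G.dist z' y = l + 1 := by omega
  rcases Nat.eq_zero_or_pos l with hl0 | hlpos
  · constructor
    · exact (hconn.dist_eq_zero_iff.mp (by omega))
    · exact (hconn.dist_eq_zero_iff.mp (by omega))
  · exfalso
    obtain ⟨r, hrpath, hrlen⟩ := exists_path_length_eq_dist hconn z y
    have hvns : v ∉ r.support := by
      intro hv
      have h1' := SimpleGraph.Walk.length_takeUntil_le r hv
      have htake : G.dist z v ≤ (r.takeUntil v hv).length := SimpleGraph.dist_le _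
      omega
    -- Walk2 : path z → v of length l+1 through y
    have hconcat : (r.concat hyv).IsPath := by
      rw [← SimpleGraph.Walk.isPath_reverse_iff, SimpleGraph.Walk.reverse_concat]
      exact SimpleGraph.Walk.IsPath.cons hrpath.reverse (by simpa using hvns)
    -- Walk1 : path z → v of length 1+l through z'
    obtain ⟨q, hqpath, hqlen⟩ := exists_path_length_eq_dist hconn z' v
    have hzns : z ∉ q.support := by
      intro hz
      have hdrop : G.dist z v ≤ (q.dropUntil z hz).length := SimpleGraph.dist_le _
      have h1' := SimpleGraph.Walk.length_dropUntil_le q hz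
      omega
    have hcons : (SimpleGraph.Walk.cons hzz' q).IsPath := SimpleGraph.Walk.IsPath.cons hqpath hzns
    have := hT.2.path_unique ⟨SimpleGraph.Walk.cons hzz' q, hcons⟩ ⟨r.concat hyv, hconcat⟩
    have hweq : SimpleGraph.Walk.cons hzz' q = r.concat hyv := congrArg Subtype.val this
    -- compare second vertices
    cases r with
    | nil => simp [SimpleGraph.Walk.length_nil] at hrlen; omega
    | @cons _ c _ hadj r₂ =>
        rw [SimpleGraph.Walk.concat_cons] at hweq
        have hsupp := congrArg SimpleGraph.Walk.support hweq
        rw [SimpleGraph.Walk.support_cons, SimpleGraph.Walk.support_cons] at hsupp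
        have : q.support = (r₂.concat hyv).support := by
          exact List.tail_eq_of_cons_eq hsupp
        have hq : q.support = z' :: q.support.tail := q.support_eq_cons
        have hr2 : (r₂.concat hyv).support = c :: (r₂.concat hyv).support.tail :=
          (r₂.concat hyv).support_eq_cons
        have hz'c : z' = c := by
          rw [hq, hr2] at this
          exact (List.cons_eq_cons.mp this).1
        subst hz'c
        have : G.dist z' y ≤ r₂.length := SimpleGraph.dist_le _
        have : r₂.length = l - 1 := by
          have := hrlen
          simp [SimpleGraph.Walk.length_cons] at this
          omega
        omega

/-- Crossing bound: if a is on the y-side and b on the v-side, any a-b walk crosses yv. -/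
lemma tree_crossing {G : SimpleGraph V} (hT : G.IsTree) {y v : V} (hyv : G.Adj y v)
    (hside : ∀ z : V, G.dist z y + 1 = G.dist z v ∨ G.dist z v + 1 = G.dist z y)
    {a b : V} (ha : G.dist a y + 1 = G.dist a v) (hb : G.dist b v + 1 = G.dist b y) :
    G.dist a y + 1 + G.dist v b ≤ G.dist a b := by
  obtain ⟨p, hplen⟩ := hT.1.exists_walk_length_eq_dist a b
  suffices h : ∀ (a' b' : V) (W : G.Walk a' b'),
      G.dist a' y + 1 = G.dist a' v → G.dist b' v + 1 = G.dist b' y →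
      G.dist a' y + 1 + G.dist v b' ≤ W.length by
    have := h a b p ha hb
    omega
  intro a' b' W
  induction W with
  | nil =>
      intro h1 h2
      omega
  | @cons s c b'' hadj W' ih =>
      intro h1 h2
      rcases hside c with hc | hc
      · have := ih hc h2
        have hsc : G.dist s y ≤ G.dist s c + G.dist c y := hT.1.dist_triangle
        have : G.dist s c ≤ 1 := adj_dist_le_one hadj
        simp only [SimpleGraph.Walk.length_cons]
        omega
      · -- flip here: s = y, c = v
        obtain ⟨hsy, hcv⟩ := tree_flip_pair hT hyv hadj h1 hc
        have hvb : G.dist v b'' ≤ W'.length := by rw [← hcv]; exact SimpleGraph.dist_le W'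
        have hsy' : G.dist s y = 0 := by rw [hsy, SimpleGraph.dist_self]
        simp only [SimpleGraph.Walk.length_cons]
        omega

lemma tree_side {G : SimpleGraph V} (hT : G.IsTree) {y v : V} (hyv : G.Adj y v)
    (z : V) : G.dist z y + 1 = G.dist z v ∨ G.dist z v + 1 = G.dist z y := by
  have hne := tree_dist_ne hT hyv z
  have h1 : G.dist z v ≤ G.dist z y + G.dist y v := hT.1.dist_triangle
  have h2 : G.dist z y ≤ G.dist z v + G.dist v y := hT.1.dist_triangle
  have h3 : G.dist y v ≤ 1 := adj_dist_le_one hyv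
  have h4 : G.dist v y ≤ 1 := adj_dist_le_one hyv.symm
  omega

theorem exists_facet_meeting_both'
    [Fintype V] [DecidableEq V] (G : SimpleGraph V) (hT : G.IsTree)
    (h3 : 3 ≤ Fintype.card V)
    (ν : ℕ) (hν : ∀ k M, IsNMatching G k M → k ≤ ν)
    (U : Finset (Finset V)) (hU : IsNMatching G ν U)
    (M N : Finset (Finset V)) (hM : IsNMatching G ν M) (hN : IsNMatching G ν N)
    (F G' : Finset V) (hFM : F ∈ M) (hFU : F ∉ U) (hGN : G' ∈ N) (hGU : G' ∉ U)
    (hdisj : ∀ v ∈ F, v ∉ G' → ∀ H ∈ N, v ∉ H) :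
    ∃ H ∈ U, (H ∩ F).Nonempty ∧ (H ∩ G').Nonempty := by
  have hconn := hT.1
  obtain ⟨u, hFu, -⟩ := hM.2.1 F hFM
  obtain ⟨v, hGv, -⟩ := hN.2.1 G' hGN
  have huF : u ∈ F := by rw [hFu]; exact self_mem_closedNbhd' G u
  have hvG : v ∈ G' := by rw [hGv]; exact self_mem_closedNbhd' G v
  by_contra hcon
  -- F is disjoint from every member of N other than G'
  have hFK : ∀ K ∈ N, K ≠ G' → F ∩ K = ∅ := by
    intro K hK hKG
    by_contra hne
    obtain ⟨t, ht⟩ := Finset.nonempty_iff_ne_empty.mpr hne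
    rw [Finset.mem_inter] at ht
    by_cases htG : t ∈ G'
    · exact (Finset.disjoint_left.mp (hN.2.2 G' hGN K hK (Ne.symm hKG)) htG) ht.2
    · exact hdisj t ht.1 htG K hK ht.2
  -- F ∩ G' is nonempty
  have hzFG : (F ∩ G').Nonempty := by
    by_contra hne
    rw [Finset.not_nonempty_iff_eq_empty] at hne
    have hFall : ∀ K ∈ N, F ∩ K = ∅ := by
      intro K hK
      by_cases hKG : K = G'
      · rw [hKG]; exact hne
      · exact hFK K hK hKG
    have hFnotN : F ∉ N := by
      intro hFN
      have h0 := hFall F hFN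
      rw [Finset.inter_self] at h0
      rw [h0] at huF
      exact absurd huF (Finset.notMem_empty u)
    have hmatch : IsNMatching G (ν + 1) (insert F N) := by
      refine ⟨by rw [Finset.card_insert_of_notMem hFnotN, hN.1], ?_, ?_⟩
      · intro K hK
        rcases Finset.mem_insert.mp hK with hKF | hK
        · rw [hKF]; exact hM.2.1 F hFM
        · exact hN.2.1 K hK
      · intro P hP Q hQ hPQ
        rcases Finset.mem_insert.mp hP with hPF | hP <;>
          rcases Finset.mem_insert.mp hQ with hQF | hQ
        · exact absurd (hPF.trans hQF.symm) hPQ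
        · refine Finset.disjoint_iff_inter_eq_empty.mpr ?_
          rw [hPF]; exact hFall Q hQ
        · refine (Finset.disjoint_iff_inter_eq_empty.mpr ?_).symm
          rw [hQF]; exact hFall P hP
        · exact hN.2.2 P hP Q hQ hPQ
    have := hν (ν + 1) _ hmatch
    omega
  -- the case F = G'
  by_cases hFG : F = G'
  · have hUF : ∃ H ∈ U, (H ∩ F).Nonempty := by
      by_contra hall
      push_neg at hall
      have hFnotU : F ∉ U := hFU
      have hmatch : IsNMatching G (ν + 1) (insert F U) := by
        refine ⟨by rw [Finset.card_insert_of_notMem hFnotU, hU.1], ?_, ?_⟩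
        · intro K hK
          rcases Finset.mem_insert.mp hK with hKF | hK
          · rw [hKF]; exact hM.2.1 F hFM
          · exact hU.2.1 K hK
        · intro P hP Q hQ hPQ
          rcases Finset.mem_insert.mp hP with hPF | hP <;>
            rcases Finset.mem_insert.mp hQ with hQF | hQ
          · exact absurd (hPF.trans hQF.symm) hPQ
          · refine Finset.disjoint_iff_inter_eq_empty.mpr ?_
            rw [hPF, Finset.inter_comm]
            exact hall Q hQ
          · refine (Finset.disjoint_iff_inter_eq_empty.mpr ?_).symm
            rw [hQF, Finset.inter_comm]
            exact hall P hP
          · exact hU.2.2 P hP Q hQ hPQ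
      have := hν (ν + 1) _ hmatch
      omega
    obtain ⟨H, hH, hne⟩ := hUF
    exact hcon ⟨H, hH, hne, hFG ▸ hne⟩
  -- now F ≠ G'
  have huv : u ≠ v := fun h => hFG (by rw [hFu, hGv, h])
  have hdzuv : G.dist u v ≤ 2 := by
    refine (inter_nonempty_iff_dist_le_two hconn u v).mp ?_
    rw [← hFu, ← hGv]; exact hzFG
  have hduv_pos : G.dist u v ≠ 0 := fun h => huv (hconn.dist_eq_zero_iff.mp h)
  -- construct y : neighbor of v on the u-v geodesic
  obtain ⟨y, hyv, huy_le, huy_eq⟩ :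
      ∃ y, G.Adj y v ∧ G.dist u y ≤ 1 ∧ G.dist u y + 1 = G.dist u v := by
    obtain ⟨p, hp⟩ := hconn.exists_walk_length_eq_dist u v
    cases p with
    | nil =>
        simp only [SimpleGraph.Walk.length_nil] at hp
        omega
    | cons h q =>
        rename_i m
        cases q with
        | nil =>
            refine ⟨u, h, by simp [SimpleGraph.dist_self], ?_⟩
            simp only [SimpleGraph.Walk.length_cons, SimpleGraph.Walk.length_nil] at hp
            rw [SimpleGraph.dist_self]
            omega
        | cons h₂ r =>
            cases r with
            | nil =>
                simp only [SimpleGraph.Walk.length_cons, SimpleGraph.Walk.length_nil] at hp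
                have hmu : m ≠ u := by
                  intro hmu'
                  have hadj' : G.Adj u v := hmu' ▸ h₂
                  have := adj_dist_le_one hadj'
                  omega
                have h1 : G.dist u m ≤ 1 := adj_dist_le_one h
                have h0 : G.dist u m ≠ 0 := fun hh => hmu (hconn.dist_eq_zero_iff.mp hh).symm
                exact ⟨m, h₂, h1, by omega⟩
            | cons h₃ r' =>
                simp only [SimpleGraph.Walk.length_cons] at hp
                omega
  have hside := fun z => tree_side hT hyv z
  have hdyv1 : G.dist v y = 1 := by
    have h1 : G.dist v y ≤ 1 := adj_dist_le_one hyv.symm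
    have h0 : G.dist v y ≠ 0 := fun h => hyv.ne (hconn.dist_eq_zero_iff.mp h).symm
    omega
  have hv_s2 : G.dist v v + 1 = G.dist v y := by rw [SimpleGraph.dist_self, hdyv1]
  -- side predicates on facets
  set S1 : Finset V → Prop :=
    fun K => ∃ w, K = closedNbhd G w ∧ G.dist w y + 1 = G.dist w v with hS1def
  set S2 : Finset V → Prop :=
    fun K => ∃ w, K = closedNbhd G w ∧ G.dist w v + 1 = G.dist w y with hS2def
  have hSiff : ∀ (P : V → Prop) (K : Finset V) (w : V), K = closedNbhd G w →
      ((∃ w', K = closedNbhd G w' ∧ P w') ↔ P w) := by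
    intro P K w hKw
    constructor
    · rintro ⟨w', hw', hs⟩
      have : w = w' := closedNbhd_injective hT h3 (by rw [← hw', ← hKw])
      rwa [this]
    · intro hs; exact ⟨w, hKw, hs⟩
  have hS1S2 : ∀ K, S1 K → S2 K → False := by
    rintro K ⟨w1, hw1, hs1⟩ ⟨w2, hw2, hs2⟩
    have : w1 = w2 := closedNbhd_injective hT h3 (by rw [← hw1, ← hw2])
    subst this
    omega
  -- counting
  have hNsplit : (N.filter S1).card + (N.filter S2).card = ν := by
    have hcongr : N.filter S2 = N.filter (fun K => ¬ S1 K) := by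
      apply Finset.filter_congr
      intro K hK
      obtain ⟨w, hKw, -⟩ := hN.2.1 K hK
      rw [hS2def, hS1def]
      simp only
      rw [hSiff _ K w hKw, hSiff _ K w hKw]
      rcases hside w with h | h
      · constructor
        · intro h'; omega
        · intro h'; exact absurd h h'
      · constructor
        · intro _ h'; omega
        · intro _; exact h
    rw [hcongr, Finset.card_filter_add_card_filter_not, hN.1]
  have hUsplit : (U.filter S1).card + (U.filter S2).card = ν := by
    have hcongr : U.filter S2 = U.filter (fun K => ¬ S1 K) := by
      apply Finset.filter_congr
      intro K hK
      obtain ⟨w, hKw, -⟩ := hU.2.1 K hK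
      rw [hS2def, hS1def]
      simp only
      rw [hSiff _ K w hKw, hSiff _ K w hKw]
      rcases hside w with h | h
      · constructor
        · intro h'; omega
        · intro h'; exact absurd h h'
      · constructor
        · intro _ h'; omega
        · intro _; exact h
    rw [hcongr, Finset.card_filter_add_card_filter_not, hU.1]
  -- mixed disjointness for X = N.filter S2 ∪ U.filter S1
  have hmixX : ∀ P Q : Finset V, P ∈ N.filter S2 → Q ∈ U.filter S1 → Disjoint P Q := by
    intro P Q hP hQ
    obtain ⟨hPN, wP, hPw, hsP⟩ := Finset.mem_filter.mp hP
    obtain ⟨hQU, wQ, hQw, hsQ⟩ := Finset.mem_filter.mp hQ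
    rw [Finset.disjoint_iff_inter_eq_empty, ← Finset.not_nonempty_iff_eq_empty]
    intro hne'
    have hdle : G.dist wP wQ ≤ 2 := by
      refine (inter_nonempty_iff_dist_le_two hconn _ _).mp ?_
      rw [← hPw, ← hQw]; exact hne'
    by_cases hwv : wP = v
    · -- P = G'
      have hPG : P = G' := by rw [hPw, hwv, ← hGv]
      have hQG : (Q ∩ G').Nonempty := by
        rw [← hPG, Finset.inter_comm]; exact hne'
      by_cases hQF : (Q ∩ F).Nonempty
      · exact hcon ⟨Q, hQU, hQF, hQG⟩
      · have hd3 : ¬ (G.dist wQ u ≤ 2) := by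
          intro h
          exact hQF (by rw [hQw, hFu]; exact (inter_nonempty_iff_dist_le_two hconn _ _).mpr h)
        have ht := hconn.dist_triangle (u := wQ) (v := y) (w := u)
        have hyu : G.dist y u ≤ 1 := by rw [SimpleGraph.dist_comm]; exact huy_le
        have hcm : G.dist wQ v = G.dist v wQ := SimpleGraph.dist_comm
        rw [hwv] at hdle
        omega
    · have hPG : P ≠ G' := fun h => hwv (closedNbhd_injective hT h3 (by rw [← hPw, h, hGv]))
      have hdisjPG : Disjoint G' P := hN.2.2 G' hGN P hPN (Ne.symm hPG)
      have hGPempty : ¬ (closedNbhd G v ∩ closedNbhd G wP).Nonempty := by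
        rintro ⟨t, ht⟩
        rw [Finset.mem_inter, ← hGv, ← hPw] at ht
        exact (Finset.disjoint_left.mp hdisjPG ht.1) ht.2
      have hdvP : ¬ (G.dist v wP ≤ 2) := fun h =>
        hGPempty ((inter_nonempty_iff_dist_le_two hconn _ _).mpr h)
      have hcross := tree_crossing hT hyv hside hsQ hsP
      have hcm : G.dist wQ wP = G.dist wP wQ := SimpleGraph.dist_comm
      omega
  -- mixed disjointness for Y₀ = N.filter S1 ∪ U.filter S2
  have hmixY : ∀ P Q : Finset V, P ∈ N.filter S1 → Q ∈ U.filter S2 → Disjoint P Q := by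
    intro P Q hP hQ
    obtain ⟨hPN, wP, hPw, hsP⟩ := Finset.mem_filter.mp hP
    obtain ⟨hQU, wQ, hQw, hsQ⟩ := Finset.mem_filter.mp hQ
    have hwPv : wP ≠ v := by
      rintro rfl
      rw [SimpleGraph.dist_self] at hsP
      omega
    have hPG : P ≠ G' := fun h => hwPv (closedNbhd_injective hT h3 (by rw [← hPw, h, hGv]))
    have hFP : F ∩ P = ∅ := hFK P hPN hPG
    have hd3 : ¬ (G.dist u wP ≤ 2) := by
      intro h
      have : (F ∩ P).Nonempty := by
        rw [hFu, hPw]; exact (inter_nonempty_iff_dist_le_two hconn _ _).mpr h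
      rw [hFP] at this
      exact Finset.not_nonempty_empty this
    have ht := hconn.dist_triangle (u := u) (v := y) (w := wP)
    have hywP : G.dist y wP = G.dist wP y := SimpleGraph.dist_comm
    have hcross := tree_crossing hT hyv hside hsP hsQ
    rw [Finset.disjoint_iff_inter_eq_empty, ← Finset.not_nonempty_iff_eq_empty]
    intro hne'
    have hdle : G.dist wP wQ ≤ 2 := by
      refine (inter_nonempty_iff_dist_le_two hconn _ _).mp ?_
      rw [← hPw, ← hQw]; exact hne'
    omega
  -- F is disjoint from every member of Y₀
  have hFY0 : ∀ Q ∈ N.filter S1 ∪ U.filter S2, F ∩ Q = ∅ := by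
    intro Q hQ
    rcases Finset.mem_union.mp hQ with hQ | hQ
    · obtain ⟨hQN, wQ, hQw, hsQ⟩ := Finset.mem_filter.mp hQ
      have hwQv : wQ ≠ v := by
        rintro rfl
        rw [SimpleGraph.dist_self] at hsQ
        omega
      exact hFK Q hQN (fun h => hwQv (closedNbhd_injective hT h3 (by rw [← hQw, h, hGv])))
    · obtain ⟨hQU, wQ, hQw, hsQ⟩ := Finset.mem_filter.mp hQ
      rw [← Finset.not_nonempty_iff_eq_empty]
      intro hne'
      have hQF : (Q ∩ F).Nonempty := by rw [Finset.inter_comm]; exact hne'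
      have hQG : ¬ (Q ∩ G').Nonempty := fun h => hcon ⟨Q, hQU, hQF, h⟩
      have hd3 : ¬ (G.dist wQ v ≤ 2) := by
        intro h
        exact hQG (by rw [hQw, hGv]; exact (inter_nonempty_iff_dist_le_two hconn _ _).mpr h)
      have hdle : G.dist u wQ ≤ 2 := by
        refine (inter_nonempty_iff_dist_le_two hconn _ _).mp ?_
        rw [← hFu, ← hQw]; exact hne'
      have ht := hconn.dist_triangle (u := wQ) (v := u) (w := y)
      have hcm : G.dist wQ u = G.dist u wQ := SimpleGraph.dist_comm
      have hcm2 : G.dist u y ≤ 1 := huy_le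
      omega
  have hFnotY0 : F ∉ N.filter S1 ∪ U.filter S2 := by
    intro hmem
    have h0 := hFY0 F hmem
    rw [Finset.inter_self] at h0
    rw [h0] at huF
    exact absurd huF (Finset.notMem_empty u)
  -- X is a matching
  have hXdisj : Disjoint (N.filter S2) (U.filter S1) := by
    rw [Finset.disjoint_left]
    intro K hK hK'
    exact hS1S2 K (Finset.mem_filter.mp hK').2 (Finset.mem_filter.mp hK).2
  have hYdisj : Disjoint (N.filter S1) (U.filter S2) := by
    rw [Finset.disjoint_left]
    intro K hK hK'
    exact hS1S2 K (Finset.mem_filter.mp hK).2 (Finset.mem_filter.mp hK').2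
  have hXmatch : IsNMatching G (N.filter S2 ∪ U.filter S1).card (N.filter S2 ∪ U.filter S1) := by
    refine ⟨rfl, ?_, ?_⟩
    · intro K hK
      rcases Finset.mem_union.mp hK with hK | hK
      · exact hN.2.1 K (Finset.mem_of_mem_filter K hK)
      · exact hU.2.1 K (Finset.mem_of_mem_filter K hK)
    · intro P hP Q hQ hPQ
      rcases Finset.mem_union.mp hP with hP | hP <;> rcases Finset.mem_union.mp hQ with hQ | hQ
      · exact hN.2.2 P (Finset.mem_of_mem_filter P hP) Q (Finset.mem_of_mem_filter Q hQ) hPQ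
      · exact hmixX P Q hP hQ
      · exact (hmixX Q P hQ hP).symm
      · exact hU.2.2 P (Finset.mem_of_mem_filter P hP) Q (Finset.mem_of_mem_filter Q hQ) hPQ
  have hYmatch : IsNMatching G ((N.filter S1 ∪ U.filter S2).card + 1)
      (insert F (N.filter S1 ∪ U.filter S2)) := by
    refine ⟨by rw [Finset.card_insert_of_notMem hFnotY0], ?_, ?_⟩
    · intro K hK
      rcases Finset.mem_insert.mp hK with hKF | hK
      · rw [hKF]; exact hM.2.1 F hFM
      · rcases Finset.mem_union.mp hK with hK | hK
        · exact hN.2.1 K (Finset.mem_of_mem_filter K hK)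
        · exact hU.2.1 K (Finset.mem_of_mem_filter K hK)
    · intro P hP Q hQ hPQ
      rcases Finset.mem_insert.mp hP with hPF | hP <;>
        rcases Finset.mem_insert.mp hQ with hQF | hQ
      · exact absurd (hPF.trans hQF.symm) hPQ
      · refine Finset.disjoint_iff_inter_eq_empty.mpr ?_
        rw [hPF]; exact hFY0 Q hQ
      · refine (Finset.disjoint_iff_inter_eq_empty.mpr ?_).symm
        rw [hQF]; exact hFY0 P hP
      · rcases Finset.mem_union.mp hP with hP | hP <;>
          rcases Finset.mem_union.mp hQ with hQ | hQ
        · exact hN.2.2 P (Finset.mem_of_mem_filter P hP) Q (Finset.mem_of_mem_filter Q hQ) hPQ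
        · exact hmixY P Q hP hQ
        · exact (hmixY Q P hQ hP).symm
        · exact hU.2.2 P (Finset.mem_of_mem_filter P hP) Q (Finset.mem_of_mem_filter Q hQ) hPQ
  have hXle := hν _ _ hXmatch
  have hYle := hν _ _ hYmatch
  have hXcard : (N.filter S2 ∪ U.filter S1).card
      = (N.filter S2).card + (U.filter S1).card := Finset.card_union_of_disjoint hXdisj
  have hYcard : (N.filter S1 ∪ U.filter S2).card
      = (N.filter S1).card + (U.filter S2).card := Finset.card_union_of_disjoint hYdisj
  omega

/-- Lemma 4.4: let `T` be a tree (with at least three vertices, rooted at a pendant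
vertex `x`), `U` the unique `>_lex`-maximal `ν`-matching, and `M`, `N` two `ν`-matchings
with `F ∈ M \ U` and `G' ∈ N \ U`.  If `(F \ G') ∩ V_N = ∅`, then there is a facet
`H ∈ U` meeting both `F` and `G'`. -/
theorem exists_facet_meeting_both
    [Fintype V] [LinearOrder V] (G : SimpleGraph V) (hT : G.IsTree)
    (h3 : 3 ≤ Fintype.card V) (x : V) (hx : G.degree x = 1)
    (ν : ℕ) (hν : ∀ k M, IsNMatching G k M → k ≤ ν)
    (U : Finset (Finset V)) (hU : IsNMatching G ν U)
    (hUmax : ∀ M, IsNMatching G ν M → M ≠ U → MatchGTlex G x U M)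
    (M N : Finset (Finset V)) (hM : IsNMatching G ν M) (hN : IsNMatching G ν N)
    (F G' : Finset V) (hFM : F ∈ M) (hFU : F ∉ U) (hGN : G' ∈ N) (hGU : G' ∉ U)
    (hdisj : ∀ v ∈ F, v ∉ G' → ∀ H ∈ N, v ∉ H) :
    ∃ H ∈ U, (H ∩ F).Nonempty ∧ (H ∩ G').Nonempty := by
  exact exists_facet_meeting_both' G hT h3 ν hν U hU M N hM hN F G' hFM hFU hGN hGU hdisj
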